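/- For all s, t ≥ 0 and every integer j ≥ 0, the Dyson series terms satisfy the product structure identity T_j(s + t) = Σ_{k=0}^{j} (e^{isH0} T_{j−k}(t) e^{−isH0}) · T_k(s), where the middle factor is the conjugation of T_{j−k}(t) by the free propagator accounting for the time shift V(s + u) = e^{isH0} V(u) e^{−isH0}. -/

import Mathlib

open MeasureTheory

noncomputable section

variable {𝓗 : Type} [NormedAddCommGroup 𝓗] [InnerProductSpace ℂ 𝓗] [CompleteSpace 𝓗]

/-- `opExp t A = e^{-itA}`, the operator exponential. -/
def opExp (t : ℝ) (A : 𝓗 →L[ℂ] 𝓗) : 𝓗 →L[ℂ] 𝓗 :=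
  NormedSpace.exp ((-(Complex.I * t)) • A)

/-- The interaction picture potential `V(s) = e^{isH0} V e^{-isH0}`. -/
def interactionV (H0 V : 𝓗 →L[ℂ] 𝓗) (s : ℝ) : 𝓗 →L[ℂ] 𝓗 :=
  opExp (-s) H0 * V * opExp s H0

/-- `T_1(t) = ∫_0^t V(s) ds`. -/
def T1 (H0 V : 𝓗 →L[ℂ] 𝓗) (t : ℝ) : 𝓗 →L[ℂ] 𝓗 :=
  ∫ s in Set.Ioc (0 : ℝ) t, interactionV H0 V s

/-- The simplex `{0 ≤ s 0 ≤ ⋯ ≤ s (j-1) ≤ t}`. -/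
def simplex (j : ℕ) (t : ℝ) : Set (Fin j → ℝ) :=
  {s | Monotone s ∧ ∀ i, s i ∈ Set.Icc 0 t}

/-- The `j`-th term `T_j(t)` of the Dyson series: the Bochner integral over the simplex of
the decreasingly ordered product `V(s_j) ⋯ V(s_1)`.  For `j = 0` this is the identity. -/
def dyson (H0 V : 𝓗 →L[ℂ] 𝓗) (j : ℕ) (t : ℝ) : 𝓗 →L[ℂ] 𝓗 :=
  ∫ s in simplex j t, (List.ofFn fun i => interactionV H0 V (s i)).reverse.prod

private lemma opExp_exp_add {x y : 𝓗 →L[ℂ] 𝓗} (h : Commute x y) :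
    NormedSpace.exp (x + y) = NormedSpace.exp x * NormedSpace.exp y :=
  NormedSpace.exp_add_of_commute_of_mem_ball (𝕂 := ℂ) h
    (by simp [NormedSpace.expSeries_radius_eq_top]) (by simp [NormedSpace.expSeries_radius_eq_top])

private lemma opExp_exp_continuous : Continuous (NormedSpace.exp : (𝓗 →L[ℂ] 𝓗) → _) := by
  rw [← continuousOn_univ]
  simpa [NormedSpace.expSeries_radius_eq_top] using
    NormedSpace.continuousOn_exp (𝕂 := ℂ) (𝔸 := 𝓗 →L[ℂ] 𝓗)

lemma opExp_add (a b : ℝ) (A : 𝓗 →L[ℂ] 𝓗) :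
    opExp (a + b) A = opExp a A * opExp b A := by
  unfold opExp
  rw [← opExp_exp_add]
  · congr 1
    push_cast
    rw [← add_smul]
    ring_nf
  · exact ((Commute.refl A).smul_left _).smul_right _

lemma opExp_zero (A : 𝓗 →L[ℂ] 𝓗) : opExp 0 A = 1 := by
  unfold opExp
  simp [NormedSpace.exp_zero]

lemma opExp_mul_neg (a : ℝ) (A : 𝓗 →L[ℂ] 𝓗) : opExp a A * opExp (-a) A = 1 := by
  rw [← opExp_add, add_neg_cancel, opExp_zero]

lemma opExp_neg_mul (a : ℝ) (A : 𝓗 →L[ℂ] 𝓗) : opExp (-a) A * opExp a A = 1 := by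
  rw [← opExp_add, neg_add_cancel, opExp_zero]

lemma continuous_opExp (A : 𝓗 →L[ℂ] 𝓗) : Continuous fun t : ℝ => opExp t A := by
  unfold opExp
  exact opExp_exp_continuous.comp (by fun_prop)

lemma continuous_interactionV (H0 V : 𝓗 →L[ℂ] 𝓗) :
    Continuous fun s : ℝ => interactionV H0 V s := by
  unfold interactionV
  exact (((continuous_opExp H0).comp continuous_neg).mul continuous_const).mul
    (continuous_opExp H0)

lemma interactionV_shift (H0 V : 𝓗 →L[ℂ] 𝓗) (s u : ℝ) :
    interactionV H0 V (s + u)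
      = opExp (-s) H0 * interactionV H0 V u * opExp s H0 := by
  unfold interactionV
  rw [neg_add, opExp_add, opExp_add]
  have h : opExp s H0 * opExp u H0 = opExp u H0 * opExp s H0 := by
    rw [← opExp_add, ← opExp_add, add_comm]
  rw [h]
  noncomm_ring

lemma isClosed_simplex (j : ℕ) (t : ℝ) : IsClosed (simplex j t) := by
  have h1 : IsClosed {s : Fin j → ℝ | Monotone s} := by
    have : {s : Fin j → ℝ | Monotone s}
        = ⋂ (p : Fin j × Fin j) (_ : p.1 ≤ p.2), {s | s p.1 ≤ s p.2} := by
      ext s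
      simp only [Set.mem_setOf_eq, Set.mem_iInter, Monotone]
      exact ⟨fun h p hp => h hp, fun h a b hab => h (a, b) hab⟩
    rw [this]
    exact isClosed_iInter fun p => isClosed_iInter fun _ =>
      isClosed_le (continuous_apply p.1) (continuous_apply p.2)
  have h2 : IsClosed {s : Fin j → ℝ | ∀ i, s i ∈ Set.Icc 0 t} := by
    have : {s : Fin j → ℝ | ∀ i, s i ∈ Set.Icc 0 t}
        = ⋂ i, (fun s : Fin j → ℝ => s i) ⁻¹' Set.Icc 0 t := by
      ext; simp
    rw [this]
    exact isClosed_iInter fun i => isClosed_Icc.preimage (continuous_apply i)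
  exact h1.inter h2

lemma isCompact_simplex (j : ℕ) (t : ℝ) : IsCompact (simplex j t) := by
  refine (isCompact_Icc (a := fun _ : Fin j => (0:ℝ)) (b := fun _ => t)).of_isClosed_subset
    (isClosed_simplex j t) ?_
  intro s hs
  exact ⟨fun i => (hs.2 i).1, fun i => (hs.2 i).2⟩

lemma measurableSet_simplex (j : ℕ) (t : ℝ) : MeasurableSet (simplex j t) :=
  (isClosed_simplex j t).measurableSet

lemma continuous_prodFn (H0 V : 𝓗 →L[ℂ] 𝓗) (j : ℕ) :
    Continuous fun s : Fin j → ℝ =>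
      (List.ofFn fun i => interactionV H0 V (s i)).reverse.prod := by
  have : ∀ s : Fin j → ℝ, (List.ofFn fun i => interactionV H0 V (s i)).reverse.prod
      = (((List.finRange j).reverse).map fun i => interactionV H0 V (s i)).prod := by
    intro s
    rw [List.ofFn_eq_map, ← List.map_reverse]
  simp only [this]
  exact continuous_list_prod _ fun i _ =>
    (continuous_interactionV H0 V).comp (continuous_apply i)

lemma integrableOn_prodFn (H0 V : 𝓗 →L[ℂ] 𝓗) (j : ℕ) (t : ℝ) :
    IntegrableOn (fun s : Fin j → ℝ =>
      (List.ofFn fun i => interactionV H0 V (s i)).reverse.prod) (simplex j t) := by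
  exact (continuous_prodFn H0 V j).continuousOn.integrableOn_compact (isCompact_simplex j t)

lemma dyson_zero (H0 V : 𝓗 →L[ℂ] 𝓗) (t : ℝ) : dyson H0 V 0 t = 1 := by
  unfold dyson
  have hs : simplex 0 t = Set.univ := by
    ext s
    constructor
    · exact fun _ => trivial
    · exact fun _ => ⟨fun a => absurd a.2 (Nat.not_lt_zero _), fun i => absurd i.2 (Nat.not_lt_zero _)⟩
  rw [hs]
  simp only [List.ofFn_zero, List.reverse_nil, List.prod_nil]
  rw [setIntegral_univ, integral_const]
  have : (volume : Measure (Fin 0 → ℝ)) Set.univ = 1 := by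
    rw [volume_pi, Measure.pi_univ]
    simp
  rw [measureReal_def, this]
  simp

lemma snoc_mem_simplex_iff {j : ℕ} {τ u : ℝ} {σ : Fin j → ℝ} :
    Fin.snoc σ u ∈ simplex (j + 1) τ ↔ u ∈ Set.Icc 0 τ ∧ σ ∈ simplex j u := by
  constructor
  · rintro ⟨hm, hb⟩
    have hb' := hb (Fin.last j)
    rw [Fin.snoc_last] at hb'
    refine ⟨hb', ⟨?_, fun i => ⟨?_, ?_⟩⟩⟩
    · intro a b hab
      have := hm (Fin.castSucc_le_castSucc_iff.mpr hab)
      simpa [Fin.snoc_castSucc] using this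
    · have := (hb i.castSucc).1
      rwa [Fin.snoc_castSucc] at this
    · have := hm (Fin.le_last i.castSucc)
      rwa [Fin.snoc_castSucc, Fin.snoc_last] at this
  · rintro ⟨⟨hu0, huτ⟩, ⟨hm, hb⟩⟩
    have hle : ∀ i : Fin j, σ i ≤ u := fun i => (hb i).2
    constructor
    · intro a b hab
      rcases Fin.eq_castSucc_or_eq_last b with ⟨b', rfl⟩ | rfl
      · rcases Fin.eq_castSucc_or_eq_last a with ⟨a', rfl⟩ | rfl
        · simpa [Fin.snoc_castSucc] using hm (Fin.castSucc_le_castSucc_iff.mp hab)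
        · have : b'.castSucc = Fin.last j := le_antisymm (Fin.le_last _) hab
          rw [this]
      · rcases Fin.eq_castSucc_or_eq_last a with ⟨a', rfl⟩ | rfl
        · simpa [Fin.snoc_castSucc, Fin.snoc_last] using hle a'
        · exact le_rfl
    · intro i
      rcases Fin.eq_castSucc_or_eq_last i with ⟨i', rfl⟩ | rfl
      · rw [Fin.snoc_castSucc]
        exact ⟨(hb i').1, le_trans (hle i') huτ⟩
      · rw [Fin.snoc_last]
        exact ⟨hu0, huτ⟩

lemma prodFn_snoc (H0 V : 𝓗 →L[ℂ] 𝓗) {j : ℕ} (u : ℝ) (σ : Fin j → ℝ) :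
    (List.ofFn fun i => interactionV H0 V ((Fin.snoc σ u : Fin (j+1) → ℝ) i)).reverse.prod
      = interactionV H0 V u *
        (List.ofFn fun i => interactionV H0 V (σ i)).reverse.prod := by
  rw [List.ofFn_succ']
  simp only [Fin.snoc_castSucc, Fin.snoc_last, List.concat_eq_append, List.reverse_append,
    List.reverse_cons, List.reverse_nil, List.nil_append, List.singleton_append, List.prod_cons]

lemma dyson_succ (H0 V : 𝓗 →L[ℂ] 𝓗) (j : ℕ) {τ : ℝ} (hτ : 0 ≤ τ) :
    dyson H0 V (j + 1) τ
      = ∫ u in (0:ℝ)..τ, interactionV H0 V u * dyson H0 V j u := by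
  classical
  set F : (Fin (j + 1) → ℝ) → (𝓗 →L[ℂ] 𝓗) :=
    fun σ => (List.ofFn fun i => interactionV H0 V (σ i)).reverse.prod with hF
  set F' : (Fin j → ℝ) → (𝓗 →L[ℂ] 𝓗) :=
    fun σ => (List.ofFn fun i => interactionV H0 V (σ i)).reverse.prod with hF'
  set e := MeasurableEquiv.piFinSuccAbove (fun _ : Fin (j + 1) => ℝ) (Fin.last j) with he
  have hmp := volume_preserving_piFinSuccAbove (fun _ : Fin (j + 1) => ℝ) (Fin.last j)
  have hsymm : ∀ (u : ℝ) (σ : Fin j → ℝ), e.symm (u, σ) = Fin.snoc σ u := by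
    intro u σ
    show (Fin.insertNthEquiv (fun _ => ℝ) (Fin.last j)) (u, σ) = _
    simp [Fin.insertNthEquiv, Fin.insertNth_last']
  have hI : Integrable ((simplex (j + 1) τ).indicator F) :=
    (integrable_indicator_iff (measurableSet_simplex (j + 1) τ)).2
      (integrableOn_prodFn H0 V (j + 1) τ)
  have hIc : Integrable (((simplex (j + 1) τ).indicator F) ∘ e.symm) :=
    ((hmp.symm e).integrable_comp_emb e.symm.measurableEmbedding).2 hI
  have step1 : dyson H0 V (j + 1) τ = ∫ σ, (simplex (j + 1) τ).indicator F σ :=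
    (integral_indicator (measurableSet_simplex (j + 1) τ)).symm
  have step2 : ∫ σ, (simplex (j + 1) τ).indicator F σ
      = ∫ p : ℝ × (Fin j → ℝ), (simplex (j + 1) τ).indicator F (e.symm p) :=
    ((hmp.symm e).integral_comp e.symm.measurableEmbedding _).symm
  have step3 : ∫ p : ℝ × (Fin j → ℝ), (simplex (j + 1) τ).indicator F (e.symm p)
      = ∫ u : ℝ, ∫ σ : Fin j → ℝ, (simplex (j + 1) τ).indicator F (e.symm (u, σ)) := by
    rw [show (volume : Measure (ℝ × (Fin j → ℝ))) = Measure.prod volume volume from rfl]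
    exact integral_prod _ hIc
  have step4 : ∀ u : ℝ, (∫ σ : Fin j → ℝ, (simplex (j + 1) τ).indicator F (e.symm (u, σ)))
      = (Set.Icc (0:ℝ) τ).indicator
          (fun u => interactionV H0 V u * dyson H0 V j u) u := by
    intro u
    by_cases hu : u ∈ Set.Icc (0:ℝ) τ
    · rw [Set.indicator_of_mem hu]
      have hfun : (fun σ : Fin j → ℝ => (simplex (j + 1) τ).indicator F (e.symm (u, σ)))
          = (simplex j u).indicator (fun σ => interactionV H0 V u * F' σ) := by
        funext σ
        rw [hsymm]
        by_cases hσ : σ ∈ simplex j u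
        · rw [Set.indicator_of_mem (snoc_mem_simplex_iff.mpr ⟨hu, hσ⟩),
            Set.indicator_of_mem hσ]
          exact prodFn_snoc H0 V u σ
        · rw [Set.indicator_of_notMem (fun hc => hσ (snoc_mem_simplex_iff.mp hc).2),
            Set.indicator_of_notMem hσ]
      rw [hfun, integral_indicator (measurableSet_simplex j u)]
      have := ContinuousLinearMap.integral_comp_comm
        (ContinuousLinearMap.mul ℂ (𝓗 →L[ℂ] 𝓗) (interactionV H0 V u))
        (integrableOn_prodFn H0 V j u)
      simpa [dyson, hF'] using this
    · rw [Set.indicator_of_notMem hu]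
      have hfun : (fun σ : Fin j → ℝ => (simplex (j + 1) τ).indicator F (e.symm (u, σ)))
          = fun _ => 0 := by
        funext σ
        rw [hsymm, Set.indicator_of_notMem (fun hc => hu (snoc_mem_simplex_iff.mp hc).1)]
      rw [hfun, integral_zero]
  calc dyson H0 V (j + 1) τ
      = ∫ u : ℝ, (Set.Icc (0:ℝ) τ).indicator
          (fun u => interactionV H0 V u * dyson H0 V j u) u := by
        rw [step1, step2, step3]; exact integral_congr_ae (Filter.Eventually.of_forall step4)
    _ = ∫ u in Set.Icc (0:ℝ) τ, interactionV H0 V u * dyson H0 V j u :=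
        integral_indicator measurableSet_Icc
    _ = ∫ u in Set.Ioc (0:ℝ) τ, interactionV H0 V u * dyson H0 V j u :=
        integral_Icc_eq_integral_Ioc
    _ = ∫ u in (0:ℝ)..τ, interactionV H0 V u * dyson H0 V j u :=
        (intervalIntegral.integral_of_le hτ).symm

lemma dyson_of_neg (H0 V : 𝓗 →L[ℂ] 𝓗) (j : ℕ) {τ : ℝ} (hτ : τ < 0) :
    dyson H0 V (j + 1) τ = 0 := by
  unfold dyson
  have : simplex (j + 1) τ = ∅ := by
    ext σ
    simp only [Set.mem_empty_iff_false, iff_false]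
    rintro ⟨-, hb⟩
    exact absurd ((hb 0).1.trans (hb 0).2) (not_le.mpr hτ)
  rw [this, Measure.restrict_empty, integral_zero_measure]

lemma continuous_dyson (H0 V : 𝓗 →L[ℂ] 𝓗) (j : ℕ) :
    Continuous fun t : ℝ => dyson H0 V j t := by
  induction j with
  | zero => simpa [dyson_zero] using continuous_const
  | succ j ih =>
    set g : ℝ → (𝓗 →L[ℂ] 𝓗) := fun u => interactionV H0 V u * dyson H0 V j u with hg
    have hgc : Continuous g := (continuous_interactionV H0 V).mul ih
    set G : ℝ → (𝓗 →L[ℂ] 𝓗) := (Set.Ici (0:ℝ)).indicator g with hG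
    have hGint : ∀ a b : ℝ, IntervalIntegrable G volume a b := by
      intro a b
      exact ⟨(hgc.intervalIntegrable a b).1.indicator measurableSet_Ici,
        (hgc.intervalIntegrable a b).2.indicator measurableSet_Ici⟩
    have key : ∀ τ : ℝ, dyson H0 V (j + 1) τ = ∫ u in (0:ℝ)..τ, G u := by
      intro τ
      rcases le_or_gt 0 τ with hτ | hτ
      · rw [dyson_succ H0 V j hτ, intervalIntegral.integral_of_le hτ,
          intervalIntegral.integral_of_le hτ]
        refine setIntegral_congr_fun measurableSet_Ioc fun u hu => ?_
        rw [show G u = g u from Set.indicator_of_mem (le_of_lt hu.1 : u ∈ Set.Ici (0:ℝ)) g]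
      · rw [dyson_of_neg H0 V j hτ, intervalIntegral.integral_of_ge hτ.le,
          setIntegral_indicator measurableSet_Ici]
        have : Set.Ioc τ 0 ∩ Set.Ici 0 = {(0:ℝ)} := by
          ext x
          simp only [Set.mem_inter_iff, Set.mem_Ioc, Set.mem_Ici, Set.mem_singleton_iff]
          constructor
          · rintro ⟨⟨-, h2⟩, h3⟩; exact le_antisymm h2 h3
          · rintro rfl; exact ⟨⟨hτ, le_rfl⟩, le_rfl⟩
        rw [this]
        rw [show (volume : Measure ℝ).restrict {(0:ℝ)} = 0 by
          simp [Measure.restrict_eq_zero]]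
        simp
    have : (fun t : ℝ => dyson H0 V (j + 1) t) = fun τ => ∫ u in (0:ℝ)..τ, G u :=
      funext key
    rw [this]
    exact intervalIntegral.continuous_primitive hGint 0

private lemma conj_merge {E : Type*} [Ring E] {W W' X Y Z : E} (h : W' * W = 1) :
    (W * X * W') * (W * Y * W' * Z) = (W * (X * Y) * W') * Z := by
  have : W * X * W' * (W * Y * W' * Z) = W * X * (W' * W) * Y * W' * Z := by
    simp only [mul_assoc]
  rw [this, h, mul_one]
  simp only [mul_assoc]

theorem dyson_product_structure' (H0 V : 𝓗 →L[ℂ] 𝓗)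
    (s t : ℝ) (hs : 0 ≤ s) (ht : 0 ≤ t) (j : ℕ) :
    dyson H0 V j (s + t) =
      ∑ k ∈ Finset.range (j + 1),
        (opExp (-s) H0 * dyson H0 V (j - k) t * opExp s H0) * dyson H0 V k s := by
  have hWW' : opExp (-s) H0 * opExp s H0 = 1 := opExp_neg_mul s H0
  have hW'W : opExp s H0 * opExp (-s) H0 = 1 := opExp_mul_neg s H0
  induction j generalizing t with
  | zero =>
    simp [dyson_zero, hWW']
  | succ j ih =>
    have hgc : ∀ m : ℕ, Continuous fun u : ℝ => interactionV H0 V u * dyson H0 V m u :=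
      fun m => (continuous_interactionV H0 V).mul (continuous_dyson H0 V m)
    -- step 1: split the integral
    have h1 : dyson H0 V (j + 1) (s + t)
        = dyson H0 V (j + 1) s
          + ∫ u in (0:ℝ)..t, interactionV H0 V (s + u) * dyson H0 V j (s + u) := by
      rw [dyson_succ H0 V j (by linarith : (0:ℝ) ≤ s + t),
        ← intervalIntegral.integral_add_adjacent_intervals
          ((hgc j).intervalIntegrable 0 s) ((hgc j).intervalIntegrable s (s + t)),
        ← dyson_succ H0 V j hs]
      congr 1
      rw [intervalIntegral.integral_comp_add_left
        (fun u => interactionV H0 V u * dyson H0 V j u) s, add_zero]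
    -- step 2: rewrite the integrand via the induction hypothesis
    have h2 : ∀ u ∈ Set.uIcc (0:ℝ) t,
        interactionV H0 V (s + u) * dyson H0 V j (s + u)
          = ∑ k ∈ Finset.range (j + 1),
              (opExp (-s) H0 * (interactionV H0 V u * dyson H0 V (j - k) u) * opExp s H0) * dyson H0 V k s := by
      intro u hu
      rw [Set.uIcc_of_le ht] at hu
      rw [interactionV_shift H0 V s u, ih u hu.1, Finset.mul_sum]
      refine Finset.sum_congr rfl fun k _ => ?_
      exact conj_merge hW'W
    have h3 : (∫ u in (0:ℝ)..t, interactionV H0 V (s + u) * dyson H0 V j (s + u))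
        = ∑ k ∈ Finset.range (j + 1),
            (opExp (-s) H0 * dyson H0 V (j + 1 - k) t * opExp s H0) * dyson H0 V k s := by
      rw [intervalIntegral.integral_congr h2,
        intervalIntegral.integral_finset_sum (fun k _ => by
          exact (Continuous.intervalIntegrable (by
            exact ((continuous_const.mul (hgc (j - k))).mul continuous_const).mul
              continuous_const) 0 t))]
      refine Finset.sum_congr rfl fun k hk => ?_
      have hk' : k ≤ j := Nat.lt_succ_iff.mp (Finset.mem_range.mp hk)
      have hL : ∀ X : 𝓗 →L[ℂ] 𝓗, ((ContinuousLinearMap.mul ℂ (𝓗 →L[ℂ] 𝓗)).flip (opExp s H0 * dyson H0 V k s)).comp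
          ((ContinuousLinearMap.mul ℂ (𝓗 →L[ℂ] 𝓗)) (opExp (-s) H0)) X
            = opExp (-s) H0 * X * opExp s H0 * dyson H0 V k s := by
        intro X
        simp [mul_assoc]
      calc (∫ u in (0:ℝ)..t, (opExp (-s) H0 * (interactionV H0 V u * dyson H0 V (j - k) u) * opExp s H0)
              * dyson H0 V k s)
          = ∫ u in (0:ℝ)..t, ((ContinuousLinearMap.mul ℂ (𝓗 →L[ℂ] 𝓗)).flip (opExp s H0 * dyson H0 V k s)).comp
              ((ContinuousLinearMap.mul ℂ (𝓗 →L[ℂ] 𝓗)) (opExp (-s) H0))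
              (interactionV H0 V u * dyson H0 V (j - k) u) := by
            refine intervalIntegral.integral_congr fun u _ => ?_
            rw [hL]
        _ = ((ContinuousLinearMap.mul ℂ (𝓗 →L[ℂ] 𝓗)).flip (opExp s H0 * dyson H0 V k s)).comp
              ((ContinuousLinearMap.mul ℂ (𝓗 →L[ℂ] 𝓗)) (opExp (-s) H0))
              (∫ u in (0:ℝ)..t, interactionV H0 V u * dyson H0 V (j - k) u) :=
            ContinuousLinearMap.intervalIntegral_comp_comm _
              ((hgc (j - k)).intervalIntegrable 0 t)
        _ = opExp (-s) H0 * dyson H0 V (j + 1 - k) t * opExp s H0 * dyson H0 V k s := by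
            rw [hL, ← dyson_succ H0 V (j - k) ht, Nat.succ_sub hk']
    rw [h1, h3]
    conv_rhs => rw [Finset.sum_range_succ]
    have hlast : (opExp (-s) H0 * dyson H0 V (j + 1 - (j + 1)) t * opExp s H0) * dyson H0 V (j + 1) s
        = dyson H0 V (j + 1) s := by
      rw [Nat.sub_self, dyson_zero, mul_one, hWW', one_mul]
    rw [hlast, add_comm]

/-- product structure of the Dyson series.  For all `s, t ≥ 0` and every
integer `j ≥ 0`, `T_j(s+t) = ∑_{k=0}^j (e^{isH0} T_{j-k}(t) e^{-isH0}) T_k(s)`. -/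
theorem dyson_product_structure (H0 V : 𝓗 →L[ℂ] 𝓗)
    (hH0 : IsSelfAdjoint H0) (hV : IsSelfAdjoint V)
    (s t : ℝ) (hs : 0 ≤ s) (ht : 0 ≤ t) (j : ℕ) :
    dyson H0 V j (s + t) =
      ∑ k ∈ Finset.range (j + 1),
        (opExp (-s) H0 * dyson H0 V (j - k) t * opExp s H0) * dyson H0 V k s := by
  exact dyson_product_structure' H0 V s t hs ht j
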